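/- Corollary to Theorem 11 (heteronomous bound): let G be a canonical finite digraph that contains at least one l₃₁-interval, and let ℓ be the minimum length of an l₃₁-interval of G. Then L^i(G) is canonical for every i < ℓ, and L^ℓ(G) contains a complicated vertex; i.e., the largest number of converting steps under which all iterates remain canonical equals the length of the shortest l₃₁-type interval of G. -/

import Mathlib

universe u

/-- The line digraph of a digraph `G`: vertices are the edges of `G`. -/
def lineDigraph {V : Type u} (G : Digraph V) : Digraph {e : V × V // G.Adj e.1 e.2} where
  Adj e f := e.1.2 = f.1.1

instance {V : Type u} (G : Digraph V) [Fintype V] [DecidableRel G.Adj] :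
    Fintype {e : V × V // G.Adj e.1 e.2} :=
  Subtype.fintype _

instance {V : Type u} (G : Digraph V) [DecidableEq V] :
    DecidableRel (lineDigraph G).Adj :=
  fun e f => inferInstanceAs (Decidable (e.1.2 = f.1.1))

/-- The finset of (directed) edges of `G`. -/
def edgeFinset {V : Type u} (G : Digraph V) [Fintype V] [DecidableRel G.Adj] :
    Finset (V × V) :=
  Finset.univ.filter (fun p => G.Adj p.1 p.2)

/-- The indegree of a vertex. -/
def indeg {V : Type u} (G : Digraph V) [Fintype V] [DecidableRel G.Adj] (v : V) : ℕ :=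
  (Finset.univ.filter (fun u => G.Adj u v)).card

/-- The outdegree of a vertex. -/
def outdeg {V : Type u} (G : Digraph V) [Fintype V] [DecidableRel G.Adj] (v : V) : ℕ :=
  (Finset.univ.filter (fun w => G.Adj v w)).card

/-- The cyclomatic number `ν(G) = |E| - |V| + 1`, as an integer. -/
def cyclomatic {V : Type u} (G : Digraph V) [Fintype V] [DecidableRel G.Adj] : ℤ :=
  ((edgeFinset G).card : ℤ) - (Fintype.card V : ℤ) + 1

/-- A directed walk of length `k` in `G`. -/
def IsWalk {V : Type u} (G : Digraph V) {k : ℕ} (w : Fin (k + 1) → V) : Prop :=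
  ∀ i : Fin k, G.Adj (w i.castSucc) (w i.succ)

instance {V : Type u} (G : Digraph V) [DecidableRel G.Adj] {k : ℕ} :
    DecidablePred (IsWalk G (k := k)) :=
  fun w => inferInstanceAs (Decidable (∀ i : Fin k, G.Adj (w i.castSucc) (w i.succ)))

/-- A bundled finite digraph. -/
structure FinDigraph where
  V : Type
  [fin : Fintype V]
  [deq : DecidableEq V]
  G : Digraph V
  [dec : DecidableRel G.Adj]

attribute [instance] FinDigraph.fin FinDigraph.deq FinDigraph.dec

/-- One straight-converting step: the bundled line digraph. -/
def FinDigraph.line (H : FinDigraph) : FinDigraph where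
  V := {e : H.V × H.V // H.G.Adj e.1 e.2}
  G := lineDigraph H.G

/-- The `j`-fold iterated line digraph. -/
def FinDigraph.iterLine (H : FinDigraph) : ℕ → FinDigraph
  | 0 => H
  | j + 1 => (H.iterLine j).line

/-- Canonical: every vertex simple. -/
def FinDigraph.Canonical (H : FinDigraph) : Prop :=
  ∀ v : H.V, indeg H.G v ≤ 1 ∨ outdeg H.G v ≤ 1

/-- Contains a complicated vertex. -/
def FinDigraph.HasComplicated (H : FinDigraph) : Prop :=
  ∃ v : H.V, 2 ≤ indeg H.G v ∧ 2 ≤ outdeg H.G v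

/-- An `l₃₁`-interval of length `ℓ`. -/
def IsL31 {V : Type u} (G : Digraph V) [Fintype V] [DecidableRel G.Adj] {ℓ : ℕ}
    (w : Fin (ℓ + 1) → V) : Prop :=
  IsWalk G w ∧ 2 ≤ indeg G (w 0) ∧ 2 ≤ outdeg G (w (Fin.last ℓ)) ∧
    ∀ i : Fin (ℓ + 1), 0 < (i : ℕ) → (i : ℕ) < ℓ →
      indeg G (w i) = 1 ∧ outdeg G (w i) = 1

/-- A directed cycle of length `k`. -/
def IsCycle {V : Type u} (G : Digraph V) {k : ℕ} (w : Fin (k + 1) → V) : Prop :=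
  IsWalk G w ∧ w 0 = w (Fin.last k) ∧
    ∀ i j : Fin (k + 1), (i : ℕ) < k → (j : ℕ) < k → w i = w j → i = j

/-- `G` has a contour: a directed cycle with both an entry edge and an exit edge. -/
def HasContour {V : Type u} (G : Digraph V) : Prop :=
  ∃ (k : ℕ) (w : Fin (k + 2) → V), IsCycle G (k := k + 1) w ∧
    (∃ a b : V, G.Adj a b ∧ (∃ i, w i = b) ∧
      ¬ ∃ i : Fin (k + 1), w i.castSucc = a ∧ w i.succ = b) ∧
    (∃ a b : V, G.Adj a b ∧ (∃ i, w i = a) ∧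
      ¬ ∃ i : Fin (k + 1), w i.castSucc = a ∧ w i.succ = b)

section Aux

variable {V : Type u} (G : Digraph V) [Fintype V] [DecidableEq V] [DecidableRel G.Adj]

lemma indeg_eq_card (v : V) : indeg G v = Fintype.card {u // G.Adj u v} :=
  (Fintype.card_subtype _).symm

lemma outdeg_eq_card (v : V) : outdeg G v = Fintype.card {w // G.Adj v w} :=
  (Fintype.card_subtype _).symm

lemma indeg_line (e : {e : V × V // G.Adj e.1 e.2}) :
    indeg (lineDigraph G) e = indeg G e.1.1 := by
  rw [indeg_eq_card, indeg_eq_card]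
  refine Fintype.card_congr
    { toFun := fun f => ⟨f.1.1.1, by have h2 : f.1.1.2 = e.1.1 := f.2; rw [← h2]; exact f.1.2⟩
      invFun := fun u => ⟨⟨(u.1, e.1.1), u.2⟩, rfl⟩
      left_inv := fun f => by
        apply Subtype.ext; apply Subtype.ext
        exact Prod.ext rfl f.2.symm
      right_inv := fun u => rfl }

lemma outdeg_line (e : {e : V × V // G.Adj e.1 e.2}) :
    outdeg (lineDigraph G) e = outdeg G e.1.2 := by
  rw [outdeg_eq_card, outdeg_eq_card]
  refine Fintype.card_congr
    { toFun := fun f => ⟨f.1.1.2, by have h2 : e.1.2 = f.1.1.1 := f.2; rw [h2]; exact f.1.2⟩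
      invFun := fun u => ⟨⟨(e.1.2, u.1), u.2⟩, rfl⟩
      left_inv := fun f => by
        apply Subtype.ext; apply Subtype.ext
        exact Prod.ext f.2 rfl
      right_inv := fun u => rfl }

end Aux

/-- A walk from a convergent vertex to a divergent vertex. -/
def GoodWalk (H : FinDigraph) (i : ℕ) : Prop :=
  ∃ w : Fin (i + 1) → H.V, IsWalk H.G w ∧ 2 ≤ indeg H.G (w 0) ∧
    2 ≤ outdeg H.G (w (Fin.last i))

lemma indeg_line' (H : FinDigraph) (e : H.line.V) :
    indeg H.line.G e = indeg H.G e.1.1 :=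
  indeg_line H.G e

lemma outdeg_line' (H : FinDigraph) (e : H.line.V) :
    outdeg H.line.G e = outdeg H.G e.1.2 :=
  outdeg_line H.G e

lemma line_good (H : FinDigraph) (i : ℕ) : GoodWalk H.line i ↔ GoodWalk H (i + 1) := by
  constructor
  · rintro ⟨w, hw, h0, hl⟩
    refine ⟨Fin.snoc (fun j => (w j).1.1) ((w (Fin.last i)).1.2), ?_, ?_, ?_⟩
    · intro j
      refine Fin.lastCases ?_ ?_ j
      · rw [Fin.succ_last, Fin.snoc_last, Fin.snoc_castSucc]
        exact (w (Fin.last i)).2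
      · intro j'
        rw [Fin.succ_castSucc, Fin.snoc_castSucc, Fin.snoc_castSucc]
        have h : (w j'.castSucc).1.2 = (w j'.succ).1.1 := hw j'
        rw [← h]
        exact (w j'.castSucc).2
    · rw [← Fin.castSucc_zero, Fin.snoc_castSucc]
      rw [indeg_line'] at h0
      exact h0
    · rw [Fin.snoc_last]
      rw [outdeg_line'] at hl
      exact hl
  · rintro ⟨v, hv, h0, hl⟩
    refine ⟨fun j => ⟨(v j.castSucc, v j.succ), hv j⟩, ?_, ?_, ?_⟩
    · intro j
      show v (j.castSucc.succ) = v (j.succ.castSucc)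
      rw [Fin.succ_castSucc]
    · refine le_of_le_of_eq ?_ (indeg_line' H _).symm
      show 2 ≤ indeg H.G (v ((0 : Fin (i + 1)).castSucc))
      rw [Fin.castSucc_zero]
      exact h0
    · refine le_of_le_of_eq ?_ (outdeg_line' H _).symm
      show 2 ≤ outdeg H.G (v ((Fin.last i).succ))
      rw [Fin.succ_last]
      exact hl

lemma iterLine_succ' (H : FinDigraph) (j : ℕ) :
    H.iterLine (j + 1) = (H.line).iterLine j := by
  induction j with
  | zero => rfl
  | succ j ih =>
    show (H.iterLine (j + 1)).line = ((H.line).iterLine j).line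
    rw [ih]

lemma goodwalk_iterLine (i : ℕ) : ∀ H : FinDigraph,
    GoodWalk (H.iterLine i) 0 ↔ GoodWalk H i := by
  induction i with
  | zero => intro H; exact Iff.rfl
  | succ i ih =>
    intro H
    rw [iterLine_succ']
    exact (ih H.line).trans (line_good H i)

lemma hasComplicated_iff_goodwalk (H : FinDigraph) :
    H.HasComplicated ↔ GoodWalk H 0 := by
  constructor
  · rintro ⟨v, h1, h2⟩
    exact ⟨fun _ => v, fun j => j.elim0, h1, h2⟩
  · rintro ⟨w, _, h1, h2⟩
    exact ⟨w 0, h1, h2⟩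

lemma canonical_iff (H : FinDigraph) : H.Canonical ↔ ¬ H.HasComplicated := by
  unfold FinDigraph.Canonical FinDigraph.HasComplicated
  push_neg
  exact forall_congr' fun v => by omega

lemma no_short_goodwalk (H : FinDigraph) (hcan : H.Canonical)
    (ℓ : ℕ)
    (hmin : ∀ ℓ' : ℕ, 1 ≤ ℓ' → ∀ w : Fin (ℓ' + 1) → H.V, IsL31 H.G w → ℓ ≤ ℓ')
    (i : ℕ) (hi : i < ℓ) : ¬ GoodWalk H i := by
  rintro ⟨w, hw, h0, hl⟩
  set W : ℕ → H.V := fun n => w ⟨min n i, by omega⟩ with hWdef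
  have hWeq : ∀ n (h : n ≤ i), W n = w ⟨n, by omega⟩ := by
    intro n h
    simp only [hWdef]
    congr 1
    exact Fin.ext (Nat.min_eq_left h)
  have hstep : ∀ n, n < i → H.G.Adj (W n) (W (n + 1)) := by
    intro n h
    rw [hWeq n (le_of_lt h), hWeq (n + 1) h]
    exact hw ⟨n, h⟩
  have hW0 : 2 ≤ indeg H.G (W 0) := by rw [hWeq 0 (Nat.zero_le _)]; exact h0
  have hWi : 2 ≤ outdeg H.G (W i) := by rw [hWeq i le_rfl]; exact hl
  have hWiIn : indeg H.G (W i) ≤ 1 := by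
    rcases hcan (W i) with h | h
    · exact h
    · omega
  set J := Nat.findGreatest (fun j => 2 ≤ indeg H.G (W j)) i with hJdef
  have hPJ : 2 ≤ indeg H.G (W J) :=
    Nat.findGreatest_spec (P := fun j => 2 ≤ indeg H.G (W j)) (Nat.zero_le i) hW0
  have hJle : J ≤ i := Nat.findGreatest_le i
  have hJlt : J < i := by
    rcases lt_or_eq_of_le hJle with h | h
    · exact h
    · rw [h] at hPJ; omega
  have hex2 : ∃ k, J < k ∧ k ≤ i ∧ 2 ≤ outdeg H.G (W k) := ⟨i, hJlt, le_rfl, hWi⟩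
  set K := Nat.find hex2 with hKdef
  obtain ⟨hJK, hKi, hKout⟩ := Nat.find_spec hex2
  have hKmin : ∀ m, m < K → ¬(J < m ∧ m ≤ i ∧ 2 ≤ outdeg H.G (W m)) :=
    fun m hm => Nat.find_min hex2 hm
  set L := K - J with hLdef
  have hL1 : 1 ≤ L := by omega
  have hl31 : IsL31 H.G (fun m : Fin (L + 1) => W (J + (m : ℕ))) := by
    refine ⟨?_, ?_, ?_, ?_⟩
    · intro m
      have hm : (m : ℕ) < L := m.2
      have hlt : J + (m : ℕ) < i := by omega
      have h := hstep (J + (m : ℕ)) hlt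
      simpa [Nat.add_assoc] using h
    · simpa using hPJ
    · have hJL : J + L = K := by omega
      simpa [Fin.last, hJL] using hKout
    · intro m hm1 hm2
      show indeg H.G (W (J + (m : ℕ))) = 1 ∧ outdeg H.G (W (J + (m : ℕ))) = 1
      have hlt : J + (m : ℕ) < K := by omega
      have hlti : J + (m : ℕ) < i := by omega
      constructor
      · have hnot : ¬ (2 ≤ indeg H.G (W (J + (m : ℕ)))) :=
          Nat.findGreatest_is_greatest (P := fun j => 2 ≤ indeg H.G (W j)) (n := i) (k := J + (m : ℕ)) (by omega) (by omega)
        have hpos : 0 < indeg H.G (W (J + (m : ℕ))) := by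
          have hadj := hstep (J + (m : ℕ) - 1) (by omega)
          have heq : J + (m : ℕ) - 1 + 1 = J + (m : ℕ) := by omega
          rw [heq] at hadj
          exact Finset.card_pos.2 ⟨_, Finset.mem_filter.2 ⟨Finset.mem_univ _, hadj⟩⟩
        omega
      · have hnot := hKmin (J + (m : ℕ)) hlt
        push_neg at hnot
        have hout : outdeg H.G (W (J + (m : ℕ))) ≤ 1 := by
          by_contra hc
          push_neg at hc
          exact absurd (hnot (by omega) (by omega)) (by omega)
        have hpos : 0 < outdeg H.G (W (J + (m : ℕ))) := by
          have hadj := hstep (J + (m : ℕ)) hlti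
          exact Finset.card_pos.2 ⟨_, Finset.mem_filter.2 ⟨Finset.mem_univ _, hadj⟩⟩
        omega
  have := hmin L hL1 _ hl31
  omega

/-- Corollary to Theorem 11: if `G` is canonical and `ℓ ≥ 1` is the
minimum length of an `l₃₁`-interval of `G`, then `L^i(G)` is canonical for all
`i < ℓ`, while `L^ℓ(G)` contains a complicated vertex. -/
theorem heteronomous_bound (H : FinDigraph) (hcan : H.Canonical)
    (ℓ : ℕ) (hℓ : 1 ≤ ℓ)
    (hex : ∃ w : Fin (ℓ + 1) → H.V, IsL31 H.G w)
    (hmin : ∀ ℓ' : ℕ, 1 ≤ ℓ' → ∀ w : Fin (ℓ' + 1) → H.V,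
      IsL31 H.G w → ℓ ≤ ℓ') :
    (∀ i < ℓ, (H.iterLine i).Canonical) ∧ (H.iterLine ℓ).HasComplicated := by
  constructor
  · intro i hi
    rw [canonical_iff]
    intro hcomp
    exact no_short_goodwalk H hcan ℓ hmin i hi
      ((goodwalk_iterLine i H).mp ((hasComplicated_iff_goodwalk _).mp hcomp))
  · rw [hasComplicated_iff_goodwalk, goodwalk_iterLine]
    obtain ⟨w, hw, h0, hl, _⟩ := hex
    exact ⟨w, hw, h0, hl⟩
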